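/- Fix c ∈ ℂ. Let M = M(u_0,u_1,u_2,λ) = [[0, 1, 0], [0, 0, 1], [−u_0 u_1 (u_2 + c), 0, λ]] and, taking a_0 = 1, let M(a_0,u_0,u_1,λ) = [[0, 1, 0], [0, 0, 1], [−u_0(u_1 + c), 0, λ]]. Then M satisfies both conditions: (i) ∂/∂u_0 ( ∂M/∂u_2 · M^{-1} ) = 0, and (ii) ∂/∂u_0 ( ∂M/∂u_1 · M^{-1} + M · (∂/∂u_1 (M(a_0,u_0,u_1,λ)) · M(a_0,u_0,u_1,λ)^{-1}) · M^{-1} ) = 0. -/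

import Mathlib

/-!
Setup: `K1` is the field of rational functions over `ℂ` in the commuting
variables `λ` (here `lam`) and `u_ℓ` (`ℓ : ℤ`), realized as the fraction field
of the multivariate polynomial ring.  `S1` is the shift automorphism `S`
(fixing `ℂ` and `λ`, sending `u_ℓ` to `u_{ℓ+1}`), and `Sz ℓ = S^ℓ`.
-/

set_option maxHeartbeats 4000000
set_option synthInstance.maxHeartbeats 1000000

noncomputable section

open MvPolynomial

abbrev R1 : Type := MvPolynomial (Option ℤ) ℂ
abbrev K1 : Type := FractionRing R1

def lam : K1 := algebraMap R1 K1 (X none)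
def u (ℓ : ℤ) : K1 := algebraMap R1 K1 (X (some ℓ))

def shiftR1 : R1 ≃+* R1 :=
  (renameEquiv ℂ (Equiv.optionCongr (Equiv.addRight (1:ℤ)))).toRingEquiv

/-- The shift automorphism `S` of the field `K1`. -/
def S1 : RingAut K1 := IsFractionRing.ringEquivOfRingEquiv shiftR1

/-- `Sz ℓ = S^ℓ`. -/
def Sz (ℓ : ℤ) : K1 ≃+* K1 := S1 ^ ℓ

lemma u_ne_zero (ℓ : ℤ) : u ℓ ≠ 0 := by
  simp only [u, map_ne_zero_iff _ (IsFractionRing.injective R1 K1)]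
  exact X_ne_zero _

lemma u_add_C_ne_zero (ℓ : ℤ) (c : ℂ) : u ℓ + algebraMap ℂ K1 c ≠ 0 := by
  have h : algebraMap ℂ K1 c = algebraMap R1 K1 (C c) := by
    rw [IsScalarTower.algebraMap_apply ℂ R1 K1]; rfl
  rw [u, h, ← (algebraMap R1 K1).map_add,
    map_ne_zero_iff _ (IsFractionRing.injective R1 K1)]
  intro h0
  have h1 := congrArg (coeff (Finsupp.single (some ℓ) 1)) h0
  have hne : (0 : (Option ℤ) →₀ ℕ) ≠ Finsupp.single (some ℓ) 1 := by
    exact fun h => one_ne_zero (Finsupp.single_eq_zero.mp h.symm)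
  rw [coeff_add, coeff_X, coeff_C, if_neg hne, coeff_zero] at h1
  simp at h1

lemma Minv (p : K1) (hp : p ≠ 0) :
    (!![0, 1, 0; 0, 0, 1; -p, 0, lam] : Matrix (Fin 3) (Fin 3) K1)⁻¹ =
    !![0, lam * p⁻¹, -p⁻¹; 1, 0, 0; 0, 1, 0] := by
  apply Matrix.inv_eq_right_inv
  rw [Matrix.mul_fin_three, Matrix.one_fin_three]
  ext i j
  fin_cases i <;> fin_cases j <;> simp
  · rw [show -(p * (lam * p⁻¹)) + lam = -(lam * (p * p⁻¹)) + lam by ring,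
      mul_inv_cancel₀ hp]; ring
  · rw [mul_inv_cancel₀ hp]

lemma inv_mul_helper (a b : K1) (ha : a ≠ 0) : (a * b)⁻¹ * a = b⁻¹ := by
  rw [mul_inv, mul_comm, ← mul_assoc, mul_inv_cancel₀ ha, one_mul]

/-- with `M = M(u_0,u_1,u_2,λ)` below and (taking `a_0 = 1`)
`M(a_0,u_0,u_1,λ) = [[0,1,0],[0,0,1],[−u_0(u_1+c),0,λ]]`, the matrix `M`
satisfies conditions (i) and (ii) of Theorem `thmuknew`. -/
theorem statement13 (c : ℂ)
    -- the partial derivatives `∂/∂u_ℓ`: ℂ-derivations with `∂u_m/∂u_ℓ = δ_{mℓ}`, `∂λ/∂u_ℓ = 0`: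
    (Pd : ℤ → Derivation ℂ K1 K1)
    (hPdlam : ∀ ℓ, Pd ℓ lam = 0)
    (hPdu : ∀ ℓ m : ℤ, Pd ℓ (u m) = if m = ℓ then 1 else 0) :
    -- condition (i): `∂/∂u_0 ( ∂M/∂u_2 · M⁻¹ ) = 0`
    ((!![0, 1, 0; 0, 0, 1; -(u 0 * u 1 * (u 2 + algebraMap ℂ K1 c)), 0, lam] :
        Matrix (Fin 3) (Fin 3) K1).map ⇑(Pd 2) *
      (!![0, 1, 0; 0, 0, 1; -(u 0 * u 1 * (u 2 + algebraMap ℂ K1 c)), 0, lam] :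
        Matrix (Fin 3) (Fin 3) K1)⁻¹).map ⇑(Pd 0) = 0 ∧
    -- condition (ii):
    ((!![0, 1, 0; 0, 0, 1; -(u 0 * u 1 * (u 2 + algebraMap ℂ K1 c)), 0, lam] :
        Matrix (Fin 3) (Fin 3) K1).map ⇑(Pd 1) *
      (!![0, 1, 0; 0, 0, 1; -(u 0 * u 1 * (u 2 + algebraMap ℂ K1 c)), 0, lam] :
        Matrix (Fin 3) (Fin 3) K1)⁻¹ +
      !![0, 1, 0; 0, 0, 1; -(u 0 * u 1 * (u 2 + algebraMap ℂ K1 c)), 0, lam] *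
        ((!![0, 1, 0; 0, 0, 1; -(u 0 * (u 1 + algebraMap ℂ K1 c)), 0, lam] :
            Matrix (Fin 3) (Fin 3) K1).map ⇑(Pd 1) *
          (!![0, 1, 0; 0, 0, 1; -(u 0 * (u 1 + algebraMap ℂ K1 c)), 0, lam] :
            Matrix (Fin 3) (Fin 3) K1)⁻¹) *
        (!![0, 1, 0; 0, 0, 1; -(u 0 * u 1 * (u 2 + algebraMap ℂ K1 c)), 0, lam] :
          Matrix (Fin 3) (Fin 3) K1)⁻¹).map ⇑(Pd 0) = 0 := by
  have hp : (u 0 * u 1 * (u 2 + algebraMap ℂ K1 c)) ≠ 0 :=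
    mul_ne_zero (mul_ne_zero (u_ne_zero 0) (u_ne_zero 1)) (u_add_C_ne_zero 2 c)
  have hq : (u 0 * (u 1 + algebraMap ℂ K1 c)) ≠ 0 :=
    mul_ne_zero (u_ne_zero 0) (u_add_C_ne_zero 1 c)
  have hu0 := u_ne_zero 0
  have hu1 := u_ne_zero 1
  have h1c := u_add_C_ne_zero 1 c
  have h2c := u_add_C_ne_zero 2 c
  have hcp := mul_inv_cancel₀ hp
  have hcq := mul_inv_cancel₀ hq
  have h00 : Pd 0 (u 0) = 1 := by rw [hPdu]; norm_num
  have h01 : Pd 0 (u 1) = 0 := by rw [hPdu]; norm_num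
  have h02 : Pd 0 (u 2) = 0 := by rw [hPdu]; norm_num
  have h10 : Pd 1 (u 0) = 0 := by rw [hPdu]; norm_num
  have h11 : Pd 1 (u 1) = 1 := by rw [hPdu]; norm_num
  have h12 : Pd 1 (u 2) = 0 := by rw [hPdu]; norm_num
  have h20 : Pd 2 (u 0) = 0 := by rw [hPdu]; norm_num
  have h21 : Pd 2 (u 1) = 0 := by rw [hPdu]; norm_num
  have h22 : Pd 2 (u 2) = 1 := by rw [hPdu]; norm_num
  have hC : ∀ ℓ, Pd ℓ (algebraMap ℂ K1 c) = 0 := fun ℓ => Derivation.map_algebraMap _ _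
  -- derivative matrices
  have hmap2 : (!![0, 1, 0; 0, 0, 1; -(u 0 * u 1 * (u 2 + algebraMap ℂ K1 c)), 0, lam] :
      Matrix (Fin 3) (Fin 3) K1).map ⇑(Pd 2) =
      !![0, 0, 0; 0, 0, 0; -(u 0 * u 1), 0, 0] := by
    ext i j
    fin_cases i <;> fin_cases j <;>
      simp [Matrix.map_apply, Matrix.vecHead, Matrix.vecTail, hPdlam, h20, h21, h22, hC,
        Derivation.leibniz]
    all_goals ring
  have hmap1 : (!![0, 1, 0; 0, 0, 1; -(u 0 * u 1 * (u 2 + algebraMap ℂ K1 c)), 0, lam] :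
      Matrix (Fin 3) (Fin 3) K1).map ⇑(Pd 1) =
      !![0, 0, 0; 0, 0, 0; -(u 0 * (u 2 + algebraMap ℂ K1 c)), 0, 0] := by
    ext i j
    fin_cases i <;> fin_cases j <;>
      simp [Matrix.map_apply, Matrix.vecHead, Matrix.vecTail, hPdlam, h10, h11, h12, hC,
        Derivation.leibniz]
    all_goals ring
  have hmapN : (!![0, 1, 0; 0, 0, 1; -(u 0 * (u 1 + algebraMap ℂ K1 c)), 0, lam] :
      Matrix (Fin 3) (Fin 3) K1).map ⇑(Pd 1) =
      !![0, 0, 0; 0, 0, 0; -(u 0), 0, 0] := by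
    ext i j
    fin_cases i <;> fin_cases j <;>
      simp [Matrix.map_apply, Matrix.vecHead, Matrix.vecTail, hPdlam, h10, h11, h12, hC,
        Derivation.leibniz]
    all_goals ring
  have hw : (u 0 * u 1 * u 2 + u 0 * u 1 * algebraMap ℂ K1 c)⁻¹
      = (u 0)⁻¹ * ((u 1)⁻¹ * (u 2 + algebraMap ℂ K1 c)⁻¹) := by
    rw [show u 0 * u 1 * u 2 + u 0 * u 1 * algebraMap ℂ K1 c
        = u 0 * (u 1 * (u 2 + algebraMap ℂ K1 c)) by ring, mul_inv, mul_inv]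
  have hwq : (u 0 * u 1 + u 0 * algebraMap ℂ K1 c)⁻¹
      = (u 0)⁻¹ * (u 1 + algebraMap ℂ K1 c)⁻¹ := by
    rw [show u 0 * u 1 + u 0 * algebraMap ℂ K1 c
        = u 0 * (u 1 + algebraMap ℂ K1 c) by ring, mul_inv]
  have hx0 : u 0 * (u 0)⁻¹ = 1 := mul_inv_cancel₀ hu0
  have hx1 : u 1 * (u 1)⁻¹ = 1 := mul_inv_cancel₀ hu1
  have hx1c : (u 1 + algebraMap ℂ K1 c) * (u 1 + algebraMap ℂ K1 c)⁻¹ = 1 := mul_inv_cancel₀ h1c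
  have hx2c : (u 2 + algebraMap ℂ K1 c) * (u 2 + algebraMap ℂ K1 c)⁻¹ = 1 := mul_inv_cancel₀ h2c
  have h32 : (u 0 * u 1 * (u 2 + algebraMap ℂ K1 c))⁻¹ * (u 0 * u 1)
      = (u 2 + algebraMap ℂ K1 c)⁻¹ := inv_mul_helper _ _ (mul_ne_zero hu0 hu1)
  have hq1 : (u 0 * (u 1 + algebraMap ℂ K1 c))⁻¹ * u 0
      = (u 1 + algebraMap ℂ K1 c)⁻¹ := inv_mul_helper _ _ hu0
  have hp1 : (u 0 * u 1 * (u 2 + algebraMap ℂ K1 c))⁻¹ * (u 0 * (u 2 + algebraMap ℂ K1 c))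
      = (u 1)⁻¹ := by
    rw [show u 0 * u 1 * (u 2 + algebraMap ℂ K1 c)
        = (u 0 * (u 2 + algebraMap ℂ K1 c)) * u 1 by ring]
    exact inv_mul_helper _ _ (mul_ne_zero hu0 h2c)
  constructor
  · rw [Minv _ hp, hmap2]
    have key : (!![0, 0, 0; 0, 0, 0; -(u 0 * u 1), 0, 0] *
        !![0, lam * (u 0 * u 1 * (u 2 + algebraMap ℂ K1 c))⁻¹,
           -(u 0 * u 1 * (u 2 + algebraMap ℂ K1 c))⁻¹; 1, 0, 0; 0, 1, 0] :
        Matrix (Fin 3) (Fin 3) K1) =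
        !![0, 0, 0; 0, 0, 0; 0, -(lam * (u 2 + algebraMap ℂ K1 c)⁻¹),
           (u 2 + algebraMap ℂ K1 c)⁻¹] := by
      ext i j
      fin_cases i <;> fin_cases j <;>
        simp [Matrix.mul_apply, Fin.sum_univ_three, Matrix.vecHead, Matrix.vecTail]
      all_goals first
      | linear_combination (-(lam * (u 2 + algebraMap ℂ K1 c)⁻¹ * (u 1 * (u 1)⁻¹))) * hx0 + (-(lam * (u 2 + algebraMap ℂ K1 c)⁻¹)) * hx1
      | linear_combination ((u 2 + algebraMap ℂ K1 c)⁻¹ * (u 1 * (u 1)⁻¹)) * hx0 + (u 2 + algebraMap ℂ K1 c)⁻¹ * hx1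
      | linear_combination (-(lam * (u 1 + algebraMap ℂ K1 c)⁻¹)) * hx0
      | linear_combination (u 1 + algebraMap ℂ K1 c)⁻¹ * hx0
      | linear_combination (-(lam * (u 1)⁻¹ * ((u 2 + algebraMap ℂ K1 c) * (u 2 + algebraMap ℂ K1 c)⁻¹))) * hx0 + (-(lam * (u 1)⁻¹)) * hx2c
      | linear_combination ((u 1)⁻¹ * ((u 2 + algebraMap ℂ K1 c) * (u 2 + algebraMap ℂ K1 c)⁻¹)) * hx0 + ((u 1)⁻¹) * hx2c
      | (field_simp; ring)
      | field_simp
    rw [key]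
    ext i j
    fin_cases i <;> fin_cases j <;>
      simp [Matrix.map_apply, Matrix.vecHead, Matrix.vecTail, Derivation.leibniz,
        Derivation.leibniz_inv, smul_eq_mul, h00, h01, h02, hC, hPdlam]
  · rw [Minv _ hp, Minv _ hq, hmap1, hmapN]
    have s1 : (!![0, 0, 0; 0, 0, 0; -u 0, 0, 0] *
        !![0, lam * (u 0 * (u 1 + algebraMap ℂ K1 c))⁻¹,
           -(u 0 * (u 1 + algebraMap ℂ K1 c))⁻¹; 1, 0, 0; 0, 1, 0] :
        Matrix (Fin 3) (Fin 3) K1) =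
        !![0, 0, 0; 0, 0, 0;
           0, -(lam * (u 1 + algebraMap ℂ K1 c)⁻¹), (u 1 + algebraMap ℂ K1 c)⁻¹] := by
      ext i j
      fin_cases i <;> fin_cases j <;>
        simp [Matrix.mul_apply, Fin.sum_univ_three, Matrix.vecHead, Matrix.vecTail]
      all_goals first
      | linear_combination (-(lam * (u 2 + algebraMap ℂ K1 c)⁻¹ * (u 1 * (u 1)⁻¹))) * hx0 + (-(lam * (u 2 + algebraMap ℂ K1 c)⁻¹)) * hx1
      | linear_combination ((u 2 + algebraMap ℂ K1 c)⁻¹ * (u 1 * (u 1)⁻¹)) * hx0 + (u 2 + algebraMap ℂ K1 c)⁻¹ * hx1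
      | linear_combination (-(lam * (u 1 + algebraMap ℂ K1 c)⁻¹)) * hx0
      | linear_combination (u 1 + algebraMap ℂ K1 c)⁻¹ * hx0
      | linear_combination (-(lam * (u 1)⁻¹ * ((u 2 + algebraMap ℂ K1 c) * (u 2 + algebraMap ℂ K1 c)⁻¹))) * hx0 + (-(lam * (u 1)⁻¹)) * hx2c
      | linear_combination ((u 1)⁻¹ * ((u 2 + algebraMap ℂ K1 c) * (u 2 + algebraMap ℂ K1 c)⁻¹)) * hx0 + ((u 1)⁻¹) * hx2c
      | (field_simp; ring)
      | field_simp
    rw [s1]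
    have s2 : (!![0, 1, 0; 0, 0, 1; -(u 0 * u 1 * (u 2 + algebraMap ℂ K1 c)), 0, lam] *
        !![0, 0, 0; 0, 0, 0;
           0, -(lam * (u 1 + algebraMap ℂ K1 c)⁻¹), (u 1 + algebraMap ℂ K1 c)⁻¹] :
        Matrix (Fin 3) (Fin 3) K1) =
        !![0, 0, 0;
           0, -(lam * (u 1 + algebraMap ℂ K1 c)⁻¹), (u 1 + algebraMap ℂ K1 c)⁻¹;
           0, -(lam ^ 2 * (u 1 + algebraMap ℂ K1 c)⁻¹), lam * (u 1 + algebraMap ℂ K1 c)⁻¹] := by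
      ext i j
      fin_cases i <;> fin_cases j <;>
        simp [Matrix.mul_apply, Fin.sum_univ_three, Matrix.vecHead, Matrix.vecTail] <;>
        ring
    rw [s2]
    have s3 : (!![0, 0, 0;
           0, -(lam * (u 1 + algebraMap ℂ K1 c)⁻¹), (u 1 + algebraMap ℂ K1 c)⁻¹;
           0, -(lam ^ 2 * (u 1 + algebraMap ℂ K1 c)⁻¹), lam * (u 1 + algebraMap ℂ K1 c)⁻¹] *
        !![0, lam * (u 0 * u 1 * (u 2 + algebraMap ℂ K1 c))⁻¹,
           -(u 0 * u 1 * (u 2 + algebraMap ℂ K1 c))⁻¹; 1, 0, 0; 0, 1, 0] :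
        Matrix (Fin 3) (Fin 3) K1) =
        !![0, 0, 0;
           -(lam * (u 1 + algebraMap ℂ K1 c)⁻¹), (u 1 + algebraMap ℂ K1 c)⁻¹, 0;
           -(lam ^ 2 * (u 1 + algebraMap ℂ K1 c)⁻¹), lam * (u 1 + algebraMap ℂ K1 c)⁻¹, 0] := by
      ext i j
      fin_cases i <;> fin_cases j <;>
        simp [Matrix.mul_apply, Fin.sum_univ_three, Matrix.vecHead, Matrix.vecTail] <;>
        ring
    rw [s3]
    have s4 : (!![0, 0, 0; 0, 0, 0; -(u 0 * (u 2 + algebraMap ℂ K1 c)), 0, 0] *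
        !![0, lam * (u 0 * u 1 * (u 2 + algebraMap ℂ K1 c))⁻¹,
           -(u 0 * u 1 * (u 2 + algebraMap ℂ K1 c))⁻¹; 1, 0, 0; 0, 1, 0] :
        Matrix (Fin 3) (Fin 3) K1) =
        !![0, 0, 0; 0, 0, 0; 0, -(lam * (u 1)⁻¹), (u 1)⁻¹] := by
      ext i j
      fin_cases i <;> fin_cases j <;>
        simp [Matrix.mul_apply, Fin.sum_univ_three, Matrix.vecHead, Matrix.vecTail]
      all_goals first
      | linear_combination (-(lam * (u 2 + algebraMap ℂ K1 c)⁻¹ * (u 1 * (u 1)⁻¹))) * hx0 + (-(lam * (u 2 + algebraMap ℂ K1 c)⁻¹)) * hx1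
      | linear_combination ((u 2 + algebraMap ℂ K1 c)⁻¹ * (u 1 * (u 1)⁻¹)) * hx0 + (u 2 + algebraMap ℂ K1 c)⁻¹ * hx1
      | linear_combination (-(lam * (u 1 + algebraMap ℂ K1 c)⁻¹)) * hx0
      | linear_combination (u 1 + algebraMap ℂ K1 c)⁻¹ * hx0
      | linear_combination (-(lam * (u 1)⁻¹ * ((u 2 + algebraMap ℂ K1 c) * (u 2 + algebraMap ℂ K1 c)⁻¹))) * hx0 + (-(lam * (u 1)⁻¹)) * hx2c
      | linear_combination ((u 1)⁻¹ * ((u 2 + algebraMap ℂ K1 c) * (u 2 + algebraMap ℂ K1 c)⁻¹)) * hx0 + ((u 1)⁻¹) * hx2c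
      | (field_simp; ring)
      | field_simp
    rw [s4]
    ext i j
    fin_cases i <;> fin_cases j <;>
      simp [Matrix.map_apply, Matrix.add_apply, Matrix.vecHead, Matrix.vecTail,
        Derivation.leibniz, Derivation.leibniz_inv, smul_eq_mul, h00, h01, h02, hC, hPdlam]
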